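/- Let ⟨μ,ξ⟩ = (ξ,ω) be any marked partition of type C of n with ω ≠ ∅. Then d_S⟨μ,ξ⟩ ≥ ((μ⁺)*)_B in dominance order; that is, ((ξ ∪ (ω⁺)_B)*)_B ≥ ((μ⁺)*)_B. -/

import Mathlib

namespace NilDual

/-- A "partition" is encoded as a multiset of natural numbers (its parts). -/
abbrev Ptn := Multiset ℕ

/-- All parts are positive. -/
def IsPartition (l : Ptn) : Prop := ∀ a ∈ l, 0 < a

/-- `height l a` is the number of parts of `l` that are ≥ `a`. -/
def height (l : Ptn) (a : ℕ) : ℕ := Multiset.card (l.filter (fun p => a ≤ p))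

/-- `psum l j` is the sum of the `j` largest parts of `l`. -/
def psum (l : Ptn) (j : ℕ) : ℕ := ∑ a ∈ Finset.Icc 1 l.sum, min j (height l a)

/-- `Dom l m` means `l ≤ m` in the dominance order. -/
def Dom (l m : Ptn) : Prop := ∀ j : ℕ, psum l j ≤ psum m j

/-- The transpose (conjugate) partition. -/
def transpose (l : Ptn) : Ptn :=
  Multiset.filter (fun x => 0 < x)
    (Multiset.map (fun a => height l a) (Finset.Icc 1 l.sum).val)

/-- The largest part (0 for the empty partition). -/
def maxPart (l : Ptn) : ℕ := l.sup

/-- The smallest part (0 for the empty partition). -/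
noncomputable def minPart (l : Ptn) : ℕ := sInf {a : ℕ | a ∈ l}

/-- `λ⁺`: add 1 to the largest part. -/
def up (l : Ptn) : Ptn := (maxPart l + 1) ::ₘ l.erase (maxPart l)

/-- `λ⁻`: subtract 1 from the smallest part, deleting it if it becomes 0. -/
noncomputable def down (l : Ptn) : Ptn :=
  if minPart l ≤ 1 then l.erase (minPart l)
  else (minPart l - 1) ::ₘ l.erase (minPart l)

/-- The join `λ ∨ μ = (λ* ∪ μ*)*`. -/
def pjoin (l m : Ptn) : Ptn := transpose (transpose l + transpose m)

/-- `λ₋ = (λ*⁻)*`. -/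
noncomputable def lowerStar (l : Ptn) : Ptn := transpose (down (transpose l))

inductive PType | B | C | D
deriving DecidableEq

/-- Parts of this parity must occur with even multiplicity in a partition of type `X`. -/
def badPart : PType → ℕ → Prop
  | PType.B, a => Even a
  | PType.C, a => Odd a
  | PType.D, a => Even a

/-- Membership in `𝒫_X` (sum unconstrained). -/
def InP (X : PType) (l : Ptn) : Prop :=
  IsPartition l ∧ ∀ a : ℕ, badPart X a → Even (l.count a)

/-- The parity of `n` required for `𝒫_X(n)` to be defined. -/
def sumParity : PType → ℕ → Prop
  | PType.B, n => Odd n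
  | PType.C, n => Even n
  | PType.D, n => Even n

/-- `m` is the X-collapse of `l`: `m ∈ 𝒫_X(|l|)`, `m ≤ l` in dominance order, and `m`
dominates every member of `𝒫_X(|l|)` that is dominated by `l`. -/
def IsCollapse (X : PType) (l m : Ptn) : Prop :=
  InP X m ∧ m.sum = l.sum ∧ Dom m l ∧
    ∀ ν : Ptn, InP X ν → ν.sum = l.sum → Dom ν l → Dom ν m

def CollapseDefined (X : PType) (l : Ptn) : Prop := ∃ m, IsCollapse X l m

open Classical in
/-- The X-collapse `λ_X` (junk value `0` if it does not exist). -/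
noncomputable def collapse (X : PType) (l : Ptn) : Ptn :=
  if h : CollapseDefined X l then h.choose else 0

/-- `l` is superior to `m`: smallest part of `l` ≥ largest part of `m`. -/
def Superior (l m : Ptn) : Prop := maxPart m ≤ minPart l

def EvenlySuperior (l m : Ptn) : Prop := ∃ k : ℕ, Even k ∧ maxPart m ≤ k ∧ k ≤ minPart l

def OddlySuperior (l m : Ptn) : Prop := ∃ k : ℕ, Odd k ∧ maxPart m ≤ k ∧ k ≤ minPart l

/-- The parity required of marked parts in type `X`. -/
def markParity : PType → ℕ → Prop
  | PType.C, a => Even a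
  | _, a => Odd a

/-- `(ν, η)` is a marked partition of type `X`, with underlying partition `λ = ν + η`. -/
def IsMarked (X : PType) (nu eta : Ptn) : Prop :=
  InP X (nu + eta) ∧ sumParity X (nu + eta).sum ∧
  (∀ a ∈ nu, nu.count a = 1 ∧ markParity X a) ∧
  ((X = PType.B ∨ X = PType.D) → Even (Multiset.card nu))

/-- The Sommers duality map `d_S` on marked partitions `(ν, η)`. -/
noncomputable def dS (X : PType) (nu eta : Ptn) : Ptn :=
  match X with
  | PType.B => collapse PType.C (transpose (nu + collapse PType.C (down eta)))
  | PType.C => collapse PType.B (transpose (nu + collapse PType.B (up eta)))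
  | PType.D =>
      collapse PType.D (transpose (nu + transpose (collapse PType.D (transpose eta))))

/-- `a` is a markable part of `l` in type `X`. -/
def Markable (X : PType) (l : Ptn) (a : ℕ) : Prop :=
  a ∈ l ∧ markParity X a ∧
    (match X with
     | PType.B => Odd (height l a)
     | PType.C => Even (height l a)
     | PType.D => Even (height l a))

/-- The marked partition `⟨l, ν⟩` is reduced. -/
def Reduced (X : PType) (l nu : Ptn) : Prop := ∀ a ∈ nu, Markable X l a

/-- The parts entering the definition of a special marked partition:
even of odd height (B), odd of even height (C), even of even height (D). -/
def AntiPart (X : PType) (l : Ptn) (a : ℕ) : Prop :=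
  match X with
  | PType.B => Even a ∧ Odd (height l a)
  | PType.C => Odd a ∧ Even (height l a)
  | PType.D => Even a ∧ Even (height l a)

/-- The reduced marked partition `⟨l, ν⟩` is special. -/
def SpecialMP (X : PType) (l nu : Ptn) : Prop :=
  ∀ a ∈ l, AntiPart X l a → Even (height nu a)

/-- `a` is the largest part of `l` whose height satisfies `P`. -/
def LargestWith (l : Ptn) (P : ℕ → Prop) (a : ℕ) : Prop :=
  a ∈ l ∧ P (height l a) ∧ ∀ b ∈ l, P (height l b) → b ≤ a

/-- Height parity for the top marked part in a basic block. -/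
def heightParity : PType → ℕ → Prop
  | PType.B => fun n => Odd n
  | _ => fun n => Even n

/-- A basic block of type `X`. -/
def BasicBlock (X : PType) (nu eta : Ptn) : Prop :=
  IsMarked X nu eta ∧
  ((∃ n1 n2 : ℕ, n1 < n2 ∧ nu = {n2, n1} ∧ n1 = minPart (nu + eta) ∧
      LargestWith (nu + eta) (heightParity X) n2) ∨
   (X = PType.C ∧ ∃ n2 : ℕ, nu = {n2} ∧ LargestWith (nu + eta) (heightParity X) n2))

/-- An ultrabasic block: a basic block with `n₁ ≤ 1`. -/
def Ultrabasic (X : PType) (nu eta : Ptn) : Prop :=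
  BasicBlock X nu eta ∧ (Multiset.card nu = 2 → minPart nu ≤ 1)


section AuxLemmas
open Finset

/- ### basic height lemmas -/

lemma height_antitone (l : Ptn) {a b : ℕ} (h : a ≤ b) : height l b ≤ height l a := by
  apply Multiset.card_le_card
  apply Multiset.monotone_filter_right
  intro p hp; exact le_trans h hp

lemma height_cons (x : ℕ) (l : Ptn) (a : ℕ) :
    height (x ::ₘ l) a = (if a ≤ x then 1 else 0) + height l a := by
  simp only [height, Multiset.filter_cons]
  split <;> simp [Nat.add_comm]

lemma height_add (x y : Ptn) (a : ℕ) :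
    height (x + y) a = height x a + height y a := by
  simp [height, Multiset.filter_add]

lemma mem_le_sum {l : Ptn} {p : ℕ} (hp : p ∈ l) : p ≤ l.sum :=
  Multiset.single_le_sum (fun x _ => Nat.zero_le x) p hp

lemma height_eq_zero_of_gt {l : Ptn} {a : ℕ} (h : l.sum < a) : height l a = 0 := by
  rw [height, Multiset.card_eq_zero, Multiset.filter_eq_nil]
  intro p hp hap
  exact absurd (le_trans hap (mem_le_sum hp)) (by omega)

lemma height_le_sum (l : Ptn) {a : ℕ} (ha : 1 ≤ a) : height l a ≤ l.sum := by
  classical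
  calc height l a ≤ (l.filter (fun p => a ≤ p)).sum := by
        have : ∀ p ∈ l.filter (fun p => a ≤ p), 1 ≤ p := by
          intro p hp
          have := (Multiset.mem_filter.1 hp).2
          omega
        have h2 := Multiset.card_nsmul_le_sum this
        simpa [height] using h2
      _ ≤ l.sum := by
        conv_rhs => rw [← Multiset.filter_add_not (fun p => a ≤ p) l]
        rw [Multiset.sum_add]
        exact Nat.le_add_right _ _

/- ### initial segment lemmas -/

lemma filter_Icc_le_eq (X L U : ℕ) :
    (Finset.Icc L U).filter (fun b => b ≤ X) = Finset.Icc L (min X U) := by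
  ext b; simp only [Finset.mem_filter, Finset.mem_Icc]; omega

lemma initseg (N : ℕ) (P : ℕ → Prop) [DecidablePred P]
    (hP : ∀ a b, 1 ≤ a → a ≤ b → P b → P a) :
    (Finset.Icc 1 N).filter P = Finset.Icc 1 ((Finset.Icc 1 N).filter P).card := by
  set F := (Finset.Icc 1 N).filter P with hF
  have hsub : F ⊆ Finset.Icc 1 F.card := by
    intro b hb
    have hb' := Finset.mem_filter.1 hb
    have hbI := Finset.mem_Icc.1 hb'.1
    have h1 : Finset.Icc 1 b ⊆ F := by
      intro a ha
      have haI := Finset.mem_Icc.1 ha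
      exact Finset.mem_filter.2 ⟨Finset.mem_Icc.2 ⟨haI.1, le_trans haI.2 hbI.2⟩,
        hP a b haI.1 haI.2 hb'.2⟩
    have hcard := Finset.card_le_card h1
    rw [Nat.card_Icc] at hcard
    exact Finset.mem_Icc.2 ⟨hbI.1, by omega⟩
  exact Finset.eq_of_subset_of_card_le hsub (by simp [Nat.card_Icc])

lemma initseg_mem_iff (N : ℕ) (P : ℕ → Prop) [DecidablePred P]
    (hP : ∀ a b, 1 ≤ a → a ≤ b → P b → P a) {r : ℕ} (hr : 1 ≤ r) :
    r ≤ ((Finset.Icc 1 N).filter P).card ↔ (r ≤ N ∧ P r) := by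
  constructor
  · intro h
    have : r ∈ (Finset.Icc 1 N).filter P := by
      rw [initseg N P hP]; exact Finset.mem_Icc.2 ⟨hr, h⟩
    have := Finset.mem_filter.1 this
    exact ⟨(Finset.mem_Icc.1 this.1).2, this.2⟩
  · intro ⟨h1, h2⟩
    have : r ∈ (Finset.Icc 1 N).filter P :=
      Finset.mem_filter.2 ⟨Finset.mem_Icc.2 ⟨hr, h1⟩, h2⟩
    rw [initseg N P hP] at this
    exact (Finset.mem_Icc.1 this).2



/- ### sum of heights over ranges -/

lemma sum_indicator_le (s : Finset ℕ) (x : ℕ) :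
    ∑ b ∈ s, (if b ≤ x then 1 else 0) = (s.filter (fun b => b ≤ x)).card :=
  (Finset.card_filter _ _).symm

lemma sum_height_tail (l : Ptn) (j N : ℕ) :
    ∑ b ∈ Finset.Icc (j+1) N, height l b = (l.map (fun p => min p N - j)).sum := by
  induction l using Multiset.induction with
  | empty => simp [height]
  | cons x s ih =>
    have hh : ∀ b, height (x ::ₘ s) b = (if b ≤ x then 1 else 0) + height s b :=
      fun b => height_cons x s b
    calc ∑ b ∈ Finset.Icc (j+1) N, height (x ::ₘ s) b
        = ∑ b ∈ Finset.Icc (j+1) N, ((if b ≤ x then 1 else 0) + height s b) := by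
          exact Finset.sum_congr rfl (fun b _ => hh b)
      _ = (∑ b ∈ Finset.Icc (j+1) N, (if b ≤ x then 1 else 0))
            + ∑ b ∈ Finset.Icc (j+1) N, height s b := Finset.sum_add_distrib
      _ = (min x N - j) + (s.map (fun p => min p N - j)).sum := by
          rw [ih, sum_indicator_le, filter_Icc_le_eq, Nat.card_Icc]
          omega
      _ = ((x ::ₘ s).map (fun p => min p N - j)).sum := by
          rw [Multiset.map_cons, Multiset.sum_cons]

lemma sum_height_Icc (l : Ptn) (N : ℕ) :
    ∑ b ∈ Finset.Icc 1 N, height l b = (l.map (fun p => min p N)).sum := by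
  have := sum_height_tail l 0 N
  simpa using this

lemma sum_height_all (l : Ptn) {N : ℕ} (hN : l.sum ≤ N) :
    ∑ b ∈ Finset.Icc 1 N, height l b = l.sum := by
  rw [sum_height_Icc]
  have : l.map (fun p => min p N) = l.map id := by
    apply Multiset.map_congr rfl
    intro p hp
    simp only [id]
    exact Nat.min_eq_left (le_trans (mem_le_sum hp) hN)
  rw [this, Multiset.map_id]

/- ### psum basics -/

lemma psum_range_ext (l : Ptn) (j : ℕ) {N : ℕ} (hN : l.sum ≤ N) :
    psum l j = ∑ a ∈ Finset.Icc 1 N, min j (height l a) := by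
  rw [psum]
  have h1 : Finset.Icc 1 l.sum = Finset.Ioc 0 l.sum := (Finset.Icc_add_one_left_eq_Ioc 0 _)
  have h2 : Finset.Icc 1 N = Finset.Ioc 0 N := (Finset.Icc_add_one_left_eq_Ioc 0 _)
  rw [h1, h2, ← Finset.sum_Ioc_consecutive _ (Nat.zero_le l.sum) hN]
  have : ∑ a ∈ Finset.Ioc l.sum N, min j (height l a) = 0 := by
    apply Finset.sum_eq_zero
    intro a ha
    have := (Finset.mem_Ioc.1 ha).1
    rw [height_eq_zero_of_gt this]
    simp
  omega



lemma psum_zero_j (l : Ptn) : psum l 0 = 0 := by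
  simp [psum]

lemma psum_mono_j (l : Ptn) {j j' : ℕ} (h : j ≤ j') : psum l j ≤ psum l j' := by
  apply Finset.sum_le_sum
  intro a _
  omega

lemma psum_le_sum (l : Ptn) (j : ℕ) : psum l j ≤ l.sum := by
  calc psum l j ≤ ∑ a ∈ Finset.Icc 1 l.sum, height l a :=
        Finset.sum_le_sum (fun a _ => Nat.min_le_right _ _)
    _ = l.sum := sum_height_all l le_rfl

lemma psum_stab (l : Ptn) {j : ℕ} (h : l.sum ≤ j) : psum l j = l.sum := by
  rw [psum]
  have : ∀ a ∈ Finset.Icc 1 l.sum, min j (height l a) = height l a := by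
    intro a ha
    have h1 := (Finset.mem_Icc.1 ha).1
    exact Nat.min_eq_right (le_trans (height_le_sum l h1) h)
  rw [Finset.sum_congr rfl this]
  exact sum_height_all l le_rfl

lemma min_sum_le (j : ℕ) (s : Finset ℕ) (f : ℕ → ℕ) :
    min j (∑ a ∈ s, f a) ≤ ∑ a ∈ s, min j (f a) := by
  induction s using Finset.cons_induction with
  | empty => simp
  | cons x s hx ih =>
    rw [Finset.sum_cons, Finset.sum_cons]
    omega

lemma min_le_psum (l : Ptn) (j : ℕ) : min j l.sum ≤ psum l j := by
  have h := min_sum_le j (Finset.Icc 1 l.sum) (height l)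
  rw [sum_height_all l le_rfl] at h
  exact h

lemma psum_concave (l : Ptn) (j : ℕ) :
    psum l (j+2) + psum l j ≤ 2 * psum l (j+1) := by
  rw [psum, psum, psum, Finset.mul_sum, ← Finset.sum_add_distrib]
  apply Finset.sum_le_sum
  intro a _
  omega

lemma psum_empty (j : ℕ) : psum (0 : Ptn) j = 0 := by
  simp [psum]

lemma dom_zero (m : Ptn) : Dom 0 m := by
  intro j; rw [psum_empty]; exact Nat.zero_le _

lemma Dom.trans {a b c : Ptn} (h1 : Dom a b) (h2 : Dom b c) : Dom a c :=
  fun j => le_trans (h1 j) (h2 j)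



/- ### transpose lemmas -/

lemma transpose_isPartition (l : Ptn) : IsPartition (transpose l) := by
  intro a ha
  exact (Multiset.mem_filter.1 ha).2

lemma height_transpose (l : Ptn) {r : ℕ} (hr : 1 ≤ r) :
    height (transpose l) r
      = ((Finset.Icc 1 l.sum).filter (fun b => r ≤ height l b)).card := by
  rw [height, transpose]
  rw [Multiset.filter_filter]
  have : Multiset.filter (fun p => r ≤ p ∧ 0 < p)
        (Multiset.map (fun a => height l a) (Finset.Icc 1 l.sum).val)
      = Multiset.filter (fun p => r ≤ p)
        (Multiset.map (fun a => height l a) (Finset.Icc 1 l.sum).val) := by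
    apply Multiset.filter_congr
    intro p _
    constructor
    · intro h; exact h.1
    · intro h; exact ⟨h, by omega⟩
  rw [this, Multiset.filter_map, Multiset.card_map]
  rfl

lemma transpose_sum (l : Ptn) : (transpose l).sum = l.sum := by
  rw [transpose]
  have hfil : ∀ (s : Ptn), (Multiset.filter (fun x => 0 < x) s).sum = s.sum := by
    intro s
    conv_rhs => rw [← Multiset.filter_add_not (fun x => 0 < x) s]
    rw [Multiset.sum_add]
    have : (Multiset.filter (fun x => ¬ 0 < x) s).sum = 0 := by
      apply Multiset.sum_eq_zero
      intro x hx
      have := (Multiset.mem_filter.1 hx).2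
      omega
    omega
  rw [hfil]
  have : (Multiset.map (fun a => height l a) (Finset.Icc 1 l.sum).val).sum
      = ∑ b ∈ Finset.Icc 1 l.sum, height l b := rfl
  rw [this, sum_height_all l le_rfl]

lemma le_height_transpose_iff (l : Ptn) {r a : ℕ} (hr : 1 ≤ r) (ha : 1 ≤ a) :
    a ≤ height (transpose l) r ↔ (a ≤ l.sum ∧ r ≤ height l a) := by
  rw [height_transpose l hr]
  exact initseg_mem_iff l.sum (fun b => r ≤ height l b)
    (fun x y hx hxy hy => le_trans hy (height_antitone l hxy)) ha

lemma height_transpose_transpose (l : Ptn) {r : ℕ} (hr : 1 ≤ r) :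
    height (transpose (transpose l)) r = height l r := by
  rcases le_or_gt r l.sum with hrS | hrS
  · have hml : height l r ≤ l.sum := height_le_sum l hr
    rw [height_transpose _ hr, transpose_sum]
    have : (Finset.Icc 1 l.sum).filter (fun b => r ≤ height (transpose l) b)
        = Finset.Icc 1 (height l r) := by
      ext b
      simp only [Finset.mem_filter, Finset.mem_Icc]
      constructor
      · rintro ⟨⟨hb1, hb2⟩, hb3⟩
        have h4 := ((le_height_transpose_iff l hb1 hr).1 hb3).2
        exact ⟨hb1, h4⟩
      · rintro ⟨hb1, hb2⟩
        refine ⟨⟨hb1, le_trans hb2 hml⟩, ?_⟩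
        exact (le_height_transpose_iff l hb1 hr).2 ⟨hrS, hb2⟩
    rw [this, Nat.card_Icc]
    omega
  · rw [height_eq_zero_of_gt hrS]
    rw [height_transpose _ hr, transpose_sum]
    rw [Finset.card_eq_zero]
    rw [Finset.filter_eq_empty_iff]
    intro b hb
    have hb1 := (Finset.mem_Icc.1 hb).1
    have h5 : height (transpose l) b ≤ (transpose l).sum := height_le_sum (transpose l) hb1
    rw [transpose_sum] at h5
    omega



lemma min_eq_sum_ind (j x : ℕ) :
    min j x = ∑ r ∈ Finset.Icc 1 j, (if r ≤ x then 1 else 0) := by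
  rw [sum_indicator_le, filter_Icc_le_eq, Nat.card_Icc]
  omega

lemma psum_eq_sum_height_transpose (l : Ptn) (j : ℕ) :
    psum l j = ∑ r ∈ Finset.Icc 1 j, height (transpose l) r := by
  rw [psum]
  have : ∀ a ∈ Finset.Icc 1 l.sum,
      min j (height l a) = ∑ r ∈ Finset.Icc 1 j, (if r ≤ height l a then 1 else 0) :=
    fun a _ => min_eq_sum_ind j (height l a)
  rw [Finset.sum_congr rfl this, Finset.sum_comm]
  apply Finset.sum_congr rfl
  intro r hr
  have hr1 := (Finset.mem_Icc.1 hr).1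
  rw [height_transpose l hr1, Finset.card_filter]

lemma psum_transpose (l : Ptn) (j : ℕ) :
    psum (transpose l) j = ∑ r ∈ Finset.Icc 1 j, height l r := by
  rw [psum_eq_sum_height_transpose]
  apply Finset.sum_congr rfl
  intro r hr
  exact height_transpose_transpose l (Finset.mem_Icc.1 hr).1

lemma psum_transpose_eq_map_min (l : Ptn) (j : ℕ) :
    psum (transpose l) j = (l.map (fun p => min p j)).sum := by
  rw [psum_transpose, sum_height_Icc]

lemma psum_tt (l : Ptn) (j : ℕ) :
    psum (transpose (transpose l)) j = psum l j := by
  rw [psum, psum, transpose_sum, transpose_sum]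
  apply Finset.sum_congr rfl
  intro a ha
  rw [height_transpose_transpose l (Finset.mem_Icc.1 ha).1]



/- ### transpose reverses dominance -/

/-- excess above level `j` -/
def excess (l : Ptn) (j : ℕ) : ℕ := (l.map (fun p => p - j)).sum

lemma psum_transpose_add_excess (l : Ptn) (j : ℕ) :
    psum (transpose l) j + excess l j = l.sum := by
  rw [psum_transpose_eq_map_min, excess, ← Multiset.sum_map_add]
  have : l.map (fun p => min p j + (p - j)) = l.map id := by
    apply Multiset.map_congr rfl
    intro p _
    simp only [id]
    omega
  rw [this, Multiset.map_id]

lemma Icc_split_sum (f : ℕ → ℕ) {j M : ℕ} (hj : j ≤ M) :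
    ∑ a ∈ Finset.Icc 1 M, f a
      = (∑ a ∈ Finset.Icc 1 j, f a) + ∑ a ∈ Finset.Icc (j+1) M, f a := by
  rw [(by exact Finset.Icc_add_one_left_eq_Ioc 0 M : Finset.Icc 1 M = Finset.Ioc 0 M),
    (by exact Finset.Icc_add_one_left_eq_Ioc 0 j : Finset.Icc 1 j = Finset.Ioc 0 j), Finset.Icc_add_one_left_eq_Ioc j]
  rw [← Finset.sum_Ioc_consecutive _ (Nat.zero_le j) hj]

lemma sum_Ioc_height_le_excess (l : Ptn) {j M : ℕ} (hM : l.sum ≤ M) :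
    ∑ a ∈ Finset.Icc (j+1) M, height l a = excess l j := by
  rw [sum_height_tail, excess]
  congr 1
  apply Multiset.map_congr rfl
  intro p hp
  have := le_trans (mem_le_sum hp) hM
  omega

lemma psum_le_mul_add_excess (l : Ptn) (j k : ℕ) :
    psum l k ≤ j * k + excess l j := by
  rw [psum_range_ext l k (le_max_left l.sum j)]
  rw [Icc_split_sum _ (le_max_right l.sum j)]
  have h1 : ∑ a ∈ Finset.Icc 1 j, min k (height l a) ≤ j * k := by
    calc ∑ a ∈ Finset.Icc 1 j, min k (height l a) ≤ ∑ _a ∈ Finset.Icc 1 j, k :=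
          Finset.sum_le_sum (fun a _ => Nat.min_le_left _ _)
      _ = j * k := by rw [Finset.sum_const, Nat.card_Icc, smul_eq_mul, Nat.add_sub_cancel]
  have h2 : ∑ a ∈ Finset.Icc (j+1) (max l.sum j), min k (height l a) ≤ excess l j := by
    calc ∑ a ∈ Finset.Icc (j+1) (max l.sum j), min k (height l a)
        ≤ ∑ a ∈ Finset.Icc (j+1) (max l.sum j), height l a :=
          Finset.sum_le_sum (fun a _ => Nat.min_le_right _ _)
      _ = excess l j := sum_Ioc_height_le_excess l (le_max_left _ _)
  omega

lemma psum_height_eq (l : Ptn) (j : ℕ) :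
    psum l (height l (j+1)) = j * height l (j+1) + excess l j := by
  set k := height l (j+1) with hk
  rw [psum_range_ext l k (le_max_left l.sum j)]
  rw [Icc_split_sum _ (le_max_right l.sum j)]
  have h1 : ∑ a ∈ Finset.Icc 1 j, min k (height l a) = j * k := by
    have : ∀ a ∈ Finset.Icc 1 j, min k (height l a) = k := by
      intro a ha
      have ha2 := (Finset.mem_Icc.1 ha).2
      have : height l (j+1) ≤ height l a :=
        height_antitone l (by omega : a ≤ j+1)
      omega
    rw [Finset.sum_congr rfl this, Finset.sum_const, Nat.card_Icc, smul_eq_mul,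
      Nat.add_sub_cancel]
  have h2 : ∑ a ∈ Finset.Icc (j+1) (max l.sum j), min k (height l a) = excess l j := by
    have : ∀ a ∈ Finset.Icc (j+1) (max l.sum j), min k (height l a) = height l a := by
      intro a ha
      have ha1 := (Finset.mem_Icc.1 ha).1
      have : height l a ≤ height l (j+1) := height_antitone l ha1
      omega
    rw [Finset.sum_congr rfl this]
    exact sum_Ioc_height_le_excess l (le_max_left _ _)
  omega

lemma excess_le_excess {l m : Ptn} (h : Dom l m) (j : ℕ) :
    excess l j ≤ excess m j := by
  have h1 := psum_height_eq l j
  have h2 := h (height l (j+1))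
  have h3 := psum_le_mul_add_excess m j (height l (j+1))
  omega

lemma dom_transpose {l m : Ptn} (hs : l.sum = m.sum) (h : Dom l m) :
    Dom (transpose m) (transpose l) := by
  intro j
  have h1 := psum_transpose_add_excess l j
  have h2 := psum_transpose_add_excess m j
  have h3 := excess_le_excess h j
  omega



/- ### dominance and multiset union -/

lemma psum_add_ge (x y : Ptn) (j1 j2 : ℕ) :
    psum x j1 + psum y j2 ≤ psum (x + y) (j1 + j2) := by
  have hN : (x + y).sum = x.sum + y.sum := Multiset.sum_add x y
  rw [psum_range_ext x j1 (by omega : x.sum ≤ x.sum + y.sum),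
      psum_range_ext y j2 (by omega : y.sum ≤ x.sum + y.sum),
      psum_range_ext (x+y) (j1+j2) (le_of_eq hN), ← Finset.sum_add_distrib]
  apply Finset.sum_le_sum
  intro a _
  rw [height_add]
  omega

lemma psum_add_split (x y : Ptn) (j : ℕ) :
    ∃ j1 j2 : ℕ, j1 + j2 = j ∧ psum (x + y) j ≤ psum x j1 + psum y j2 := by
  set N := x.sum + y.sum with hN
  set f := height x with hf
  set g := height y with hg
  have hfant : ∀ {a b : ℕ}, a ≤ b → f b ≤ f a := fun h => height_antitone x h
  have hgant : ∀ {a b : ℕ}, a ≤ b → g b ≤ g a := fun h => height_antitone y h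
  have hsum : (x + y).sum = N := Multiset.sum_add x y
  have hP : ∀ a b : ℕ, 1 ≤ a → a ≤ b → j ≤ f b + g b → j ≤ f a + g a := by
    intro a b _ hab hb
    have h1 := hfant hab
    have h2 := hgant hab
    omega
  set t := ((Finset.Icc 1 N).filter (fun a => j ≤ f a + g a)).card with ht
  have hmem : ∀ {r : ℕ}, 1 ≤ r → (r ≤ t ↔ (r ≤ N ∧ j ≤ f r + g r)) :=
    fun hr => initseg_mem_iff N _ hP hr
  have htN : t ≤ N := by
    have := Finset.card_filter_le (Finset.Icc 1 N) (fun a => j ≤ f a + g a)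
    rw [Nat.card_Icc] at this
    omega
  -- choose the split point
  have key : ∃ j1, j1 ≤ j ∧ ∀ a, 1 ≤ a → a ≤ N →
      min j (f a + g a) ≤ min j1 (f a) + min (j - j1) (g a) := by
    rcases Nat.lt_or_ge t N with hlt | hge
    · refine ⟨max (f (t+1)) (j - g t), ?_, ?_⟩
      · have hnot : ¬ (t + 1 ≤ t) := by omega
        have := (hmem (by omega : 1 ≤ t+1))
        have hnP : ¬ (j ≤ f (t+1) + g (t+1)) := by
          intro hc
          exact hnot (this.2 ⟨by omega, hc⟩)
        omega
      · intro a ha1 haN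
        rcases le_or_gt a t with hat | hat
        · have ht1 : 1 ≤ t := le_trans ha1 hat
          have hPt : j ≤ f t + g t := ((hmem ht1).1 le_rfl).2
          have h1 : f t ≤ f a := hfant hat
          have h2 : g t ≤ g a := hgant hat
          have h3 : f (t+1) ≤ f t := hfant (by omega)
          omega
        · have hnP : ¬ (j ≤ f a + g a) := by
            intro hc
            have := (hmem ha1).2 ⟨haN, hc⟩
            omega
          have h1 : f a ≤ f (t+1) := hfant (by omega)
          have h2 : g a ≤ g (t+1) := hgant (by omega)
          have hnPt1 : ¬ (j ≤ f (t+1) + g (t+1)) := by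
            intro hc
            have := (hmem (by omega : 1 ≤ t+1)).2 ⟨by omega, hc⟩
            omega
          have h3 : g (t+1) ≤ g t := hgant (by omega)
          omega
    · -- t = N
      refine ⟨j - min j (g N), by omega, ?_⟩
      intro a ha1 haN
      have hat : a ≤ t := by omega
      have ht1 : 1 ≤ t := le_trans ha1 hat
      have hPN : j ≤ f N + g N := ((hmem (le_trans ht1 htN)).1 (by omega)).2
      have hPa : j ≤ f a + g a := ((hmem ha1).1 hat).2
      have h1 : f N ≤ f a := hfant haN
      have h2 : g N ≤ g a := hgant haN
      omega
  obtain ⟨j1, hj1, hkey⟩ := key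
  refine ⟨j1, j - j1, by omega, ?_⟩
  rw [psum_range_ext x j1 (by omega : x.sum ≤ N),
      psum_range_ext y (j - j1) (by omega : y.sum ≤ N),
      psum_range_ext (x+y) j (le_of_eq hsum), ← Finset.sum_add_distrib]
  apply Finset.sum_le_sum
  intro a ha
  have ha' := Finset.mem_Icc.1 ha
  rw [height_add]
  exact hkey a ha'.1 ha'.2

lemma dom_add_left (x : Ptn) {y y' : Ptn} (hs : y.sum = y'.sum) (hd : Dom y y') :
    Dom (x + y) (x + y') := by
  intro j
  obtain ⟨j1, j2, hj, hle⟩ := psum_add_split x y j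
  calc psum (x + y) j ≤ psum x j1 + psum y j2 := hle
    _ ≤ psum x j1 + psum y' j2 := by have := hd j2; omega
    _ ≤ psum (x + y') (j1 + j2) := psum_add_ge x y' j1 j2
    _ = psum (x + y') j := by rw [hj]



/- ### bumping a larger part dominates bumping a smaller one -/

lemma one_le_height_of_mem {m : Ptn} {b a : ℕ} (hb : b ∈ m) (hab : a ≤ b) :
    1 ≤ height m a := by
  have : b ∈ m.filter (fun p => a ≤ p) := Multiset.mem_filter.2 ⟨hb, hab⟩
  have := Multiset.card_pos_iff_exists_mem.2 ⟨b, this⟩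
  exact this

lemma height_bump {m : Ptn} {b : ℕ} (hb : b ∈ m) (a : ℕ) :
    height ((b+1) ::ₘ m.erase b) a = height m a + (if a = b + 1 then 1 else 0) := by
  have h1 : height m a = (if a ≤ b then 1 else 0) + height (m.erase b) a := by
    conv_lhs => rw [← Multiset.cons_erase hb]
    exact height_cons b (m.erase b) a
  have h2 := height_cons (b+1) (m.erase b) a
  rw [h2]
  by_cases hab : a ≤ b
  · have : a ≤ b + 1 := by omega
    have : a ≠ b + 1 := by omega
    simp only [hab, if_true] at h1
    split_ifs <;> omega
  · split_ifs <;> simp [hab] at h1 <;> omega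

lemma sum_bump {m : Ptn} {b : ℕ} (hb : b ∈ m) :
    ((b+1) ::ₘ m.erase b).sum = m.sum + 1 := by
  rw [Multiset.sum_cons]
  have : m.sum = b + (m.erase b).sum := by
    conv_lhs => rw [← Multiset.cons_erase hb]
    exact Multiset.sum_cons b _
  omega

lemma dom_bump_le {m : Ptn} {b c : ℕ} (hb : b ∈ m) (hc : c ∈ m) (hbc : b ≤ c) :
    Dom ((b+1) ::ₘ m.erase b) ((c+1) ::ₘ m.erase c) := by
  rcases eq_or_lt_of_le hbc with rfl | hlt
  · exact fun j => le_rfl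
  intro j
  rw [psum, psum, sum_bump hb, sum_bump hc]
  set s := Finset.Icc 1 (m.sum + 1) with hs
  have hbs : b + 1 ∈ s := Finset.mem_Icc.2 ⟨by omega, by have := mem_le_sum hb; omega⟩
  have hcs : c + 1 ∈ s := Finset.mem_Icc.2 ⟨by omega, by have := mem_le_sum hc; omega⟩
  have hcs' : c + 1 ∈ s.erase (b+1) := Finset.mem_erase.2 ⟨by omega, hcs⟩
  have hbs' : b + 1 ∈ s.erase (c+1) := Finset.mem_erase.2 ⟨by omega, hbs⟩
  set F := fun a => min j (height ((b+1) ::ₘ m.erase b) a) with hF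
  set G := fun a => min j (height ((c+1) ::ₘ m.erase c) a) with hG
  have hsplitF : ∑ a ∈ s, F a = F (b+1) + (F (c+1) + ∑ a ∈ (s.erase (b+1)).erase (c+1), F a) := by
    rw [Finset.add_sum_erase _ F hcs', Finset.add_sum_erase _ F hbs]
  have hsplitG : ∑ a ∈ s, G a = G (c+1) + (G (b+1) + ∑ a ∈ (s.erase (c+1)).erase (b+1), G a) := by
    rw [Finset.add_sum_erase _ G hbs', Finset.add_sum_erase _ G hcs]
  have hsets : (s.erase (b+1)).erase (c+1) = (s.erase (c+1)).erase (b+1) :=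
    Finset.erase_right_comm
  have hcongr : ∑ a ∈ (s.erase (b+1)).erase (c+1), F a
      = ∑ a ∈ (s.erase (b+1)).erase (c+1), G a := by
    apply Finset.sum_congr rfl
    intro a ha
    have h1 : a ≠ c + 1 := (Finset.mem_erase.1 ha).1
    have h2 : a ≠ b + 1 := (Finset.mem_erase.1 (Finset.mem_erase.1 ha).2).1
    rw [hF, hG]
    simp only [height_bump hb, height_bump hc, h1, h2, if_false]
  have hht : height m (c+1) ≤ height m (b+1) := height_antitone m (by omega)
  have hFb : F (b+1) = min j (height m (b+1) + 1) := by
    rw [hF]; simp [height_bump hb]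
  have hFc : F (c+1) = min j (height m (c+1)) := by
    rw [hF]; simp only [height_bump hb]
    have : c + 1 ≠ b + 1 := by omega
    simp [this, show c ≠ b by omega]
  have hGb : G (b+1) = min j (height m (b+1)) := by
    rw [hG]; simp only [height_bump hc]
    have : b + 1 ≠ c + 1 := by omega
    simp [this, show b ≠ c by omega]
  have hGc : G (c+1) = min j (height m (c+1) + 1) := by
    rw [hG]; simp [height_bump hc]
  rw [hsplitF, hsplitG]
  rw [hsets] at hcongr
  rw [hsets, hcongr, hFb, hFc, hGb, hGc]
  omega



/- ### counts and heights, parity -/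

lemma count_add_height (l : Ptn) (a : ℕ) :
    l.count a + height l (a+1) = height l a := by
  induction l using Multiset.induction with
  | empty => simp [height]
  | cons x s ih =>
    rw [height_cons, height_cons, Multiset.count_cons]
    by_cases h : a = x
    · subst h; simp; omega
    · have h1 : (a ≤ x) ↔ (a + 1 ≤ x) := by
        constructor <;> intro <;> omega
      simp only [h, if_false]
      split_ifs with h2 h3 <;> omega

lemma heights_pair_even {ν : Ptn} (hP : InP PType.B ν) {m : ℕ} (hm : Even m) :
    Even (height ν m + height ν (m+1)) := by
  have hc : Even (ν.count m) := hP.2 m hm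
  have := count_add_height ν m
  rcases hc with ⟨e, he⟩
  refine ⟨height ν (m+1) + e, by omega⟩

lemma odd_psum_transpose {ν : Ptn} (hP : InP PType.B ν) (hodd : Odd ν.sum)
    {j : ℕ} (hj : Odd j) : Odd (psum (transpose ν) j) := by
  rw [psum_transpose]
  have hstep : ∀ m : ℕ, ∑ r ∈ Finset.Icc 1 (m+2), height ν r
      = (∑ r ∈ Finset.Icc 1 m, height ν r) + (height ν (m+1) + height ν (m+2)) := by
    intro m
    have e1 : ∑ r ∈ Finset.Icc 1 (m+1+1), height ν r
        = (∑ r ∈ Finset.Icc 1 (m+1), height ν r) + height ν (m+1+1) :=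
      Finset.sum_Icc_succ_top (by omega) _
    have e2 : ∑ r ∈ Finset.Icc 1 (m+1), height ν r
        = (∑ r ∈ Finset.Icc 1 m, height ν r) + height ν (m+1) :=
      Finset.sum_Icc_succ_top (by omega) _
    have e3 : m+1+1 = m+2 := by omega
    rw [e3] at e1
    omega
  have key : ∀ k : ℕ, ∃ e : ℕ, Even e ∧
      ∑ r ∈ Finset.Icc 1 (j + 2*k), height ν r = (∑ r ∈ Finset.Icc 1 j, height ν r) + e := by
    intro k
    induction k with
    | zero => exact ⟨0, Even.zero, by simp⟩
    | succ k ih =>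
      obtain ⟨e, ⟨e2, he2⟩, hek⟩ := ih
      have h4 : j + 2*(k+1) = (j + 2*k) + 2 := by omega
      rw [h4]
      have h2 := hstep (j + 2*k)
      have hpair : Even (height ν (j + 2*k + 1) + height ν (j + 2*k + 2)) := by
        apply heights_pair_even hP
        rcases hj with ⟨q, hq⟩
        exact ⟨q + k + 1, by omega⟩
      rcases hpair with ⟨p, hp⟩
      exact ⟨e + 2*p, ⟨e2 + p, by omega⟩, by omega⟩
  obtain ⟨e, ⟨e2, he2⟩, hek⟩ := key ν.sum
  have hbig : ∑ r ∈ Finset.Icc 1 (j + 2*ν.sum), height ν r = ν.sum :=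
    sum_height_all ν (by omega)
  rcases hodd with ⟨q, hq⟩
  rw [Nat.odd_iff]
  omega



/- ### building a partition from a concave monotone partial-sum function -/

lemma sum_filter_pos (s : Ptn) : (Multiset.filter (fun x => 0 < x) s).sum = s.sum := by
  conv_rhs => rw [← Multiset.filter_add_not (fun x => 0 < x) s]
  rw [Multiset.sum_add]
  have : (Multiset.filter (fun x => ¬ 0 < x) s).sum = 0 := by
    apply Multiset.sum_eq_zero
    intro x hx
    have := (Multiset.mem_filter.1 hx).2
    omega
  omega

lemma build (g : ℕ → ℕ) (n : ℕ) (hg0 : g 0 = 0)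
    (hmono : ∀ i, g i ≤ g (i+1))
    (hconc : ∀ i, g (i+2) + g i ≤ 2 * g (i+1))
    (hstab : ∀ j, n ≤ j → g j = g n) :
    ∃ c : Ptn, IsPartition c ∧ c.sum = g n ∧ (∀ j, psum c j = g j) ∧
      (∀ v, 1 ≤ v → height (transpose c) v = g v - g (v-1)) := by
  classical
  set d : ℕ → ℕ := fun r => g r - g (r-1) with hd
  have gmono : ∀ {i k : ℕ}, i ≤ k → g i ≤ g k := by
    intro i k hik
    induction k with
    | zero =>
      have : i = 0 := by omega
      subst this; exact le_rfl
    | succ k ih =>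
      rcases Nat.lt_or_ge i (k+1) with h | h
      · exact le_trans (ih (by omega)) (hmono k)
      · have : i = k + 1 := by omega
        subst this; exact le_rfl
  have dant : ∀ {a b : ℕ}, 1 ≤ a → a ≤ b → d b ≤ d a := by
    intro a b ha hab
    induction b with
    | zero => omega
    | succ b ih =>
      rcases Nat.lt_or_ge a (b+1) with h | h
      · have hb1 : 1 ≤ b := by omega
        refine le_trans ?_ (ih (by omega))
        obtain ⟨s, rfl⟩ : ∃ s, b = s + 1 := ⟨b - 1, by omega⟩
        have hc := hconc s
        have e1 : s + 1 + 1 = s + 2 := by omega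
        simp only [hd, e1, Nat.add_sub_cancel]
        have h1 := hmono s
        have h2 := hmono (s+1)
        have h3 : s + 2 - 1 = s + 1 := by omega
        rw [h3]
        omega
      · have : a = b + 1 := by omega
        subst this
        exact le_rfl
  set c : Ptn := Multiset.filter (fun x => 0 < x) ((Finset.Icc 1 n).val.map d) with hc
  have hpart : IsPartition c := fun a ha => (Multiset.mem_filter.1 ha).2
  have htel : ∀ m : ℕ, ∑ r ∈ Finset.Icc 1 m, d r = g m := by
    intro m
    induction m with
    | zero => simpa using hg0.symm
    | succ m ih =>
      rw [Finset.sum_Icc_succ_top (by omega : 1 ≤ m+1), ih]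
      have := hmono m
      simp only [hd, Nat.add_sub_cancel]
      omega
  have hsum : c.sum = g n := by
    rw [hc, sum_filter_pos]
    have : ((Finset.Icc 1 n).val.map d).sum = ∑ r ∈ Finset.Icc 1 n, d r := rfl
    rw [this, htel]
  have hhc : ∀ b : ℕ, 1 ≤ b →
      height c b = ((Finset.Icc 1 n).filter (fun r => b ≤ d r)).card := by
    intro b hb
    rw [height, hc, Multiset.filter_filter]
    have : Multiset.filter (fun p => b ≤ p ∧ 0 < p) ((Finset.Icc 1 n).val.map d)
        = Multiset.filter (fun p => b ≤ p) ((Finset.Icc 1 n).val.map d) := by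
      apply Multiset.filter_congr
      intro p _
      constructor
      · intro h; exact h.1
      · intro h; exact ⟨h, by omega⟩
    rw [this, Multiset.filter_map, Multiset.card_map]
    rfl
  have hdownward : ∀ (b : ℕ), ∀ x y : ℕ, 1 ≤ x → x ≤ y → b ≤ d y → b ≤ d x :=
    fun b x y hx hxy hy => le_trans hy (dant hx hxy)
  have hdlen : ∀ v, 1 ≤ v → v ≤ n → d v ≤ g n := by
    intro v hv hvn
    have h1 : g v ≤ g n := gmono hvn
    simp only [hd]
    omega
  have hht : ∀ v, 1 ≤ v → height (transpose c) v = d v := by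
    intro v hv
    rw [height_transpose c hv]
    have hcongr : (Finset.Icc 1 c.sum).filter (fun b => v ≤ height c b)
        = (Finset.Icc 1 c.sum).filter (fun b => v ≤ n ∧ b ≤ d v) := by
      apply Finset.filter_congr
      intro b hb
      have hb1 := (Finset.mem_Icc.1 hb).1
      rw [hhc b hb1]
      exact initseg_mem_iff n (fun r => b ≤ d r) (hdownward b) hv
    rw [hcongr]
    rcases Nat.lt_or_ge n v with hnv | hnv
    · have hzero : d v = 0 := by
        have h1 : g v = g n := hstab v (by omega)
        have h2 : g (v-1) = g n := hstab (v-1) (by omega)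
        simp only [hd]
        omega
      rw [hzero]
      rw [Finset.card_eq_zero, Finset.filter_eq_empty_iff]
      intro b _
      push_neg
      intro hvn
      omega
    · have : (Finset.Icc 1 c.sum).filter (fun b => v ≤ n ∧ b ≤ d v)
          = (Finset.Icc 1 c.sum).filter (fun b => b ≤ d v) := by
        apply Finset.filter_congr
        intro b _
        simp [hnv]
      rw [this, filter_Icc_le_eq, Nat.card_Icc]
      have := hdlen v hv hnv
      rw [hsum]
      omega
  refine ⟨c, hpart, hsum, ?_, ?_⟩
  · intro j
    rw [psum_eq_sum_height_transpose]
    have : ∀ r ∈ Finset.Icc 1 j, height (transpose c) r = d r := by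
      intro r hr
      exact hht r (Finset.mem_Icc.1 hr).1
    rw [Finset.sum_congr rfl this, htel]
  · intro v hv
    exact hht v hv



/- ### existence of the B-collapse -/

lemma replicate_one_psum (n j : ℕ) (hn : 1 ≤ n) :
    psum (Multiset.replicate n (1:ℕ)) j = min j n := by
  have hsum : (Multiset.replicate n (1:ℕ)).sum = n := by
    rw [Multiset.sum_replicate]; simp
  have hh : ∀ a : ℕ, height (Multiset.replicate n (1:ℕ)) a
      = if a ≤ 1 then n else 0 := by
    intro a
    rw [height]
    split_ifs with h
    · rw [Multiset.filter_eq_self.2, Multiset.card_replicate]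
      intro b hb
      rw [Multiset.eq_of_mem_replicate hb]
      exact h
    · rw [Multiset.filter_eq_nil.2, Multiset.card_zero]
      intro b hb hab
      rw [Multiset.eq_of_mem_replicate hb] at hab
      omega
  rw [psum, hsum]
  rw [Finset.sum_eq_single_of_mem 1 (Finset.mem_Icc.2 ⟨le_rfl, hn⟩)]
  · rw [hh]; simp
  · intro b hb hb1
    have := (Finset.mem_Icc.1 hb).1
    rw [hh]
    have : ¬ (b ≤ 1) := by omega
    simp [this]

lemma exists_collapse_B (l : Ptn) (hodd : Odd l.sum) : CollapseDefined PType.B l := by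
  classical
  set n := l.sum with hn
  have hn1 : 1 ≤ n := by
    rcases hodd with ⟨q, hq⟩; omega
  -- the candidate set
  set PS : Ptn → Prop := fun ν => InP PType.B ν ∧ ν.sum = l.sum ∧ Dom ν l with hPS
  set Φ : Ptn → ℕ := fun ν => ∑ j ∈ Finset.range (n+1), psum ν j with hΦ
  have hν₀ : PS (Multiset.replicate n (1:ℕ)) := by
    refine ⟨⟨?_, ?_⟩, ?_, ?_⟩
    · intro a ha
      rw [Multiset.eq_of_mem_replicate ha]
      omega
    · intro a hae
      rw [Multiset.count_replicate]
      split_ifs with h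
      · subst h
        exact absurd hae (by simp [badPart])
      · exact Even.zero
    · rw [Multiset.sum_replicate]; simp; exact hn
    · intro j
      have h1 : psum (Multiset.replicate n (1:ℕ)) j = min j n := replicate_one_psum n j hn1
      have h2 := min_le_psum l j
      rw [h1]
      rw [← hn] at h2
      exact h2
  set T : Set ℕ := {k | ∃ ν, PS ν ∧ Φ ν = k} with hT
  have hTne : T.Nonempty := ⟨Φ (Multiset.replicate n (1:ℕ)), ⟨_, hν₀, rfl⟩⟩
  have hTbdd : BddAbove T := by
    refine ⟨(n+1) * n, ?_⟩
    rintro k ⟨ν, hν, rfl⟩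
    calc Φ ν ≤ ∑ _j ∈ Finset.range (n+1), n := by
          apply Finset.sum_le_sum
          intro j _
          calc psum ν j ≤ ν.sum := psum_le_sum ν j
            _ = n := by rw [hν.2.1]
      _ = (n+1) * n := by rw [Finset.sum_const, Finset.card_range, smul_eq_mul]
  obtain ⟨νm, hνm, hΦνm⟩ := Nat.sSup_mem hTne hTbdd
  refine ⟨νm, hνm.1, by rw [hνm.2.1], hνm.2.2, ?_⟩
  -- maximality
  intro ν hν1 hν2 hν3
  -- construct the join of ν and νm
  set A : ℕ → ℕ := fun j => psum (transpose ν) j with hA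
  set B : ℕ → ℕ := fun j => psum (transpose νm) j with hB
  set γ : ℕ → ℕ := fun j => min (A j) (B j) with hγ
  have hAsum : (transpose ν).sum = n := by rw [transpose_sum, hν2]
  have hBsum : (transpose νm).sum = n := by rw [transpose_sum, hνm.2.1]
  have hγ0 : γ 0 = 0 := by
    simp only [hγ, hA, hB, psum_zero_j]
    simp
  have hγmono : ∀ i, γ i ≤ γ (i+1) := by
    intro i
    have h1 := psum_mono_j (transpose ν) (by omega : i ≤ i+1)
    have h2 := psum_mono_j (transpose νm) (by omega : i ≤ i+1)
    simp only [hγ, hA, hB]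
    omega
  have hγconc : ∀ i, γ (i+2) + γ i ≤ 2 * γ (i+1) := by
    intro i
    have h1 := psum_concave (transpose ν) i
    have h2 := psum_concave (transpose νm) i
    simp only [hγ, hA, hB]
    omega
  have hγstab : ∀ j, n ≤ j → γ j = γ n := by
    intro j hj
    have e1 : ∀ m, n ≤ m → γ m = n := by
      intro m hm
      have h1 : A m = n := by
        show psum (transpose ν) m = n
        rw [psum_stab _ (le_of_eq_of_le hAsum hm), hAsum]
      have h2 : B m = n := by
        show psum (transpose νm) m = n
        rw [psum_stab _ (le_of_eq_of_le hBsum hm), hBsum]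
      simp only [hγ, h1, h2, min_self]
    rw [e1 j hj, e1 n le_rfl]
  have hγn : γ n = n := by
    have h1 : A n = n := by
      show psum (transpose ν) n = n
      rw [psum_stab _ (le_of_eq hAsum), hAsum]
    have h2 : B n = n := by
      show psum (transpose νm) n = n
      rw [psum_stab _ (le_of_eq hBsum), hBsum]
    simp only [hγ, h1, h2, min_self]
  obtain ⟨c, hcpart, hcsum, hcpsum, hcht⟩ := build γ n hγ0 hγmono hγconc hγstab
  rw [hγn] at hcsum
  set σ : Ptn := transpose c with hσ
  have hσsum : σ.sum = n := by rw [hσ, transpose_sum, hcsum]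
  -- γ is odd at odd indices
  have hγodd : ∀ j, Odd j → Odd (γ j) := by
    intro j hj
    have h1 : Odd (A j) := odd_psum_transpose hν1 (by rw [hν2, ← hn]; exact hodd) hj
    have h2 : Odd (B j) := odd_psum_transpose hνm.1 (by rw [hνm.2.1, ← hn]; exact hodd) hj
    rcases le_total (A j) (B j) with h | h
    · simpa only [hγ, min_eq_left h] using h1
    · simpa only [hγ, min_eq_right h] using h2
  -- σ is in P_B
  have hσInP : InP PType.B σ := by
    refine ⟨transpose_isPartition c, ?_⟩
    intro a hae
    rcases Nat.eq_zero_or_pos a with rfl | ha1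
    · have : (0:ℕ) ∉ σ := by
        intro hmem
        exact absurd (transpose_isPartition c 0 hmem) (by omega)
      rw [Multiset.count_eq_zero_of_notMem this]
      exact Even.zero
    · have hco := count_add_height σ a
      have hha : height σ a = γ a - γ (a-1) := hcht a ha1
      have hha1 : height σ (a+1) = γ (a+1) - γ (a+1-1) := hcht (a+1) (by omega)
      have e1 : a + 1 - 1 = a := by omega
      rw [e1] at hha1
      have hm1 : γ (a-1) ≤ γ a := by
        have := hγmono (a-1)
        have e2 : a - 1 + 1 = a := by omega
        rwa [e2] at this
      have hm2 : γ a ≤ γ (a+1) := hγmono a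
      have ho1 : Odd (γ (a-1)) := by
        apply hγodd
        rcases hae with ⟨q, hq⟩
        exact ⟨q - 1, by omega⟩
      have ho2 : Odd (γ (a+1)) := by
        apply hγodd
        rcases hae with ⟨q, hq⟩
        exact ⟨q, by omega⟩
      rw [Nat.even_iff]
      rw [Nat.odd_iff] at ho1 ho2
      omega
  -- σ dominates ν and νm, and is dominated by l
  have hdomtl : ∀ (μ : Ptn), InP PType.B μ → μ.sum = l.sum → Dom μ l →
      Dom (transpose l) (transpose μ) := by
    intro μ _ hs hd
    exact dom_transpose hs hd
  have hDcl : Dom (transpose l) c := by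
    intro j
    have h1 := hdomtl ν hν1 hν2 hν3 j
    have h2 := hdomtl νm hνm.1 hνm.2.1 hνm.2.2 j
    rw [hcpsum j]
    simp only [hγ, hA, hB]
    omega
  have hσl : Dom σ l := by
    intro j
    have h1 := dom_transpose (by rw [transpose_sum, hcsum, hn] : (transpose l).sum = c.sum) hDcl j
    rw [psum_tt] at h1
    exact h1
  have hνσ : Dom ν σ := by
    intro j
    have hc1 : Dom c (transpose ν) := by
      intro i
      rw [hcpsum i]
      simp only [hγ, hA, hB]
      exact Nat.min_le_left _ _
    have h1 := dom_transpose (by rw [hcsum, hAsum] : c.sum = (transpose ν).sum) hc1 j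
    rw [psum_tt] at h1
    exact h1
  have hνmσ : Dom νm σ := by
    intro j
    have hc1 : Dom c (transpose νm) := by
      intro i
      rw [hcpsum i]
      simp only [hγ, hA, hB]
      exact Nat.min_le_right _ _
    have h1 := dom_transpose (by rw [hcsum, hBsum] : c.sum = (transpose νm).sum) hc1 j
    rw [psum_tt] at h1
    exact h1
  -- σ is in the candidate set, so Φ σ ≤ Φ νm, hence psum σ = psum νm
  have hσT : Φ σ ∈ T := ⟨σ, ⟨hσInP, by rw [hσsum, hn], hσl⟩, rfl⟩
  have hΦle : Φ σ ≤ Φ νm := by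
    rw [hΦνm]
    exact le_csSup hTbdd hσT
  have hΦge : Φ νm ≤ Φ σ := Finset.sum_le_sum (fun j _ => hνmσ j)
  have hterm : ∀ j, psum σ j ≤ psum νm j := by
    intro j
    rcases le_or_gt j n with hjn | hjn
    · by_contra hcon
      push_neg at hcon
      have : Φ νm < Φ σ := by
        apply Finset.sum_lt_sum (fun i _ => hνmσ i)
        exact ⟨j, Finset.mem_range.2 (by omega), hcon⟩
      omega
    · rw [psum_stab σ (by omega : σ.sum ≤ j), psum_stab νm (by rw [hνm.2.1, ← hn]; omega), hσsum, hνm.2.1, ← hn]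
  intro j
  exact le_trans (hνσ j) (hterm j)



/- ### glue lemmas -/

lemma maxPart_mem {l : Ptn} (h : l ≠ 0) : maxPart l ∈ l := by
  rw [maxPart]
  induction l using Multiset.induction with
  | empty => exact absurd rfl h
  | cons x s ih =>
    rw [Multiset.sup_cons]
    rcases max_choice x s.sup with hm | hm
    · rw [hm]
      exact Multiset.mem_cons_self x s
    · have hx : x ≤ s.sup := le_trans le_sup_left (le_of_eq hm)
      rw [hm]
      rcases Multiset.empty_or_exists_mem s with rfl | ⟨y, hy⟩
      · have hx0 : x = 0 := by simpa using hx
        subst hx0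
        simp
      · have hs : s ≠ 0 := by
          intro hcon; rw [hcon] at hy; exact absurd hy (Multiset.notMem_zero y)
        exact Multiset.mem_cons_of_mem (ih hs)

lemma up_sum {l : Ptn} (h : l ≠ 0) : (up l).sum = l.sum + 1 :=
  sum_bump (maxPart_mem h)

lemma even_sum_of_even {l : Ptn} (h : ∀ a ∈ l, Even a) : Even l.sum := by
  induction l using Multiset.induction with
  | empty => simp
  | cons x s ih =>
    rw [Multiset.sum_cons]
    have h1 := h x (Multiset.mem_cons_self x s)
    have h2 := ih (fun a ha => h a (Multiset.mem_cons_of_mem ha))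
    exact h1.add h2

end AuxLemmas

/-- From the proof of Lemma 5.12 of the paper: for any type-C marked partition
`⟨μ,ξ⟩ = (ξ,ω)` with `ω ≠ ∅`, one has `d_S⟨μ,ξ⟩ ≥ ((μ⁺)*)_B`. -/
theorem dS_typeC_lower_bound (xi omega : Ptn)
    (h : IsMarked PType.C xi omega) (hne : omega ≠ 0) :
    Dom (collapse PType.B (transpose (up (xi + omega)))) (dS PType.C xi omega) := by
  classical
  obtain ⟨hInP, hparC, hξ, -⟩ := h
  have hμne : xi + omega ≠ 0 := by
    intro hcon
    apply hne
    have hcard := congrArg Multiset.card hcon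
    rw [Multiset.card_add] at hcard
    simp only [Multiset.card_zero] at hcard
    exact Multiset.card_eq_zero.1 (by omega)
  -- parity of sums
  have hξeven : Even xi.sum := by
    apply even_sum_of_even
    intro a ha
    exact (hξ a ha).2
  have hμeven : Even (xi + omega).sum := hparC
  have hωeven : Even omega.sum := by
    rw [Multiset.sum_add] at hμeven
    rcases hξeven with ⟨p, hp⟩
    rcases hμeven with ⟨q, hq⟩
    exact ⟨q - p, by omega⟩
  have hupω_odd : Odd (up omega).sum := by
    rw [up_sum hne]
    rcases hωeven with ⟨p, hp⟩
    exact ⟨p, by omega⟩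
  -- the inner collapse κ = (ω⁺)_B
  have hκdef : CollapseDefined PType.B (up omega) := exists_collapse_B _ hupω_odd
  have hκeq : collapse PType.B (up omega) = hκdef.choose := by
    rw [collapse, dif_pos hκdef]
  have hκspec : IsCollapse PType.B (up omega) (collapse PType.B (up omega)) := by
    rw [hκeq]; exact hκdef.choose_spec
  obtain ⟨hκInP, hκsum, hκdom, -⟩ := hκspec
  set κ := collapse PType.B (up omega) with hκ
  -- the outer collapse on the right-hand side
  set L2 : Ptn := transpose (xi + κ) with hL2
  have hL2sum : L2.sum = (xi + omega).sum + 1 := by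
    rw [hL2, transpose_sum, Multiset.sum_add, hκsum, up_sum hne,
      Multiset.sum_add]
    omega
  have hL2odd : Odd L2.sum := by
    rw [hL2sum, Multiset.sum_add]
    rcases hξeven with ⟨p, hp⟩
    rcases hωeven with ⟨q, hq⟩
    exact ⟨p + q, by omega⟩
  have hC2def : CollapseDefined PType.B L2 := exists_collapse_B _ hL2odd
  have hC2eq : collapse PType.B L2 = hC2def.choose := by
    rw [collapse, dif_pos hC2def]
  have hC2spec : IsCollapse PType.B L2 (collapse PType.B L2) := by
    rw [hC2eq]; exact hC2def.choose_spec
  obtain ⟨hC2InP, hC2sum, hC2dom, hC2max⟩ := hC2spec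
  have hdS : dS PType.C xi omega = collapse PType.B L2 := rfl
  rw [hdS]
  -- case on whether the left collapse is defined
  by_cases hC1def : CollapseDefined PType.B (transpose (up (xi + omega)))
  · have hC1eq : collapse PType.B (transpose (up (xi + omega))) = hC1def.choose := by
      rw [collapse, dif_pos hC1def]
    have hC1spec : IsCollapse PType.B (transpose (up (xi + omega)))
        (collapse PType.B (transpose (up (xi + omega)))) := by
      rw [hC1eq]; exact hC1def.choose_spec
    obtain ⟨hC1InP, hC1sum, hC1dom, -⟩ := hC1spec
    -- the key domination chain
    set b := maxPart omega with hbdef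
    set c := maxPart (xi + omega) with hcdef
    have hb : b ∈ omega := maxPart_mem hne
    have hbμ : b ∈ xi + omega := Multiset.mem_add.2 (Or.inr hb)
    have hc : c ∈ xi + omega := maxPart_mem hμne
    have hbc : b ≤ c := by
      rw [hbdef, hcdef, maxPart, maxPart]
      exact Multiset.sup_le.2 (fun x hx => Multiset.le_sup (Multiset.mem_add.2 (Or.inr hx)))
    have hxiup : xi + up omega = (b + 1) ::ₘ ((xi + omega).erase b) := by
      rw [up, Multiset.add_cons, Multiset.erase_add_right_pos xi hb]
    have hupμ : up (xi + omega) = (c + 1) ::ₘ ((xi + omega).erase c) := rfl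
    have hdom1 : Dom (xi + κ) (xi + up omega) := dom_add_left xi hκsum hκdom
    have hdom2 : Dom (xi + up omega) (up (xi + omega)) := by
      rw [hxiup, hupμ]
      exact dom_bump_le hbμ hc hbc
    have hsum12 : (xi + κ).sum = (up (xi + omega)).sum := by
      rw [Multiset.sum_add, hκsum, up_sum hne, up_sum hμne, Multiset.sum_add]
      omega
    have hdomL : Dom (transpose (up (xi + omega))) L2 := by
      rw [hL2]
      exact dom_transpose hsum12 (hdom1.trans hdom2)
    apply hC2max
    · exact hC1InP
    · rw [hC1sum, transpose_sum, up_sum hμne, hL2sum]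
    · exact hC1dom.trans hdomL
  · rw [collapse, dif_neg hC1def]
    exact dom_zero _

end NilDual
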